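/- In the N=2 selfish-mining model with γ1 = γ2 = 1/2, θ1 = θ2 = 1/3 and symmetric selfish Hashrates α1 = α2 = α, the profitable threshold is approximately 27%: if 0.28 ≤ α < 1/3 then R_A > α (selfish mining is profitable), while if 0 < α ≤ 0.26 then R_A < α (selfish mining is unprofitable). -/

import Mathlib

/-- N=2 selfish-mining model: Alice's valid-block rate. -/
noncomputable def R1N2 (a1 a2 g1 g2 t1 t2 : ℝ) : ℝ :=
  let h := 1 - a1 - a2
  (2*a1^2*(1+h) + (a2+h)*a1*h*g1 + a1*a2*h + 4*a1^2*a2*(1+h) + 2*a1*a2*h^2*t1)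
    / (1 + a1 + a2 + a1*h + 2*a1*a2 + a2*h + 2*a1*a2*h)

/-- N=2 selfish-mining model: Bob's valid-block rate. -/
noncomputable def R2N2 (a1 a2 g1 g2 t1 t2 : ℝ) : ℝ :=
  let h := 1 - a1 - a2
  (2*a2^2*(1+h) + (a1+h)*h*a2*g2 + a1*a2*h + 4*a2^2*a1*(1+h) + 2*a1*a2*h^2*t2)
    / (1 + a1 + a2 + a1*h + 2*a1*a2 + a2*h + 2*a1*a2*h)

/-- N=2 selfish-mining model: Henry's valid-block rate. -/
noncomputable def RhN2 (a1 a2 g1 g2 t1 t2 : ℝ) : ℝ :=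
  let h := 1 - a1 - a2
  (h + a1*h^2*(2-g1) + a2*h^2*(2-g2) + 2*a1*a2*h^2*(2-t1-t2) + a1*a2*h*(2-g1-g2))
    / (1 + a1 + a2 + a1*h + 2*a1*a2 + a2*h + 2*a1*a2*h)

/-- N=2 model: Alice's relative revenue R_A. -/
noncomputable def RA2 (a1 a2 g1 g2 t1 t2 : ℝ) : ℝ :=
  R1N2 a1 a2 g1 g2 t1 t2 /
    (R1N2 a1 a2 g1 g2 t1 t2 + R2N2 a1 a2 g1 g2 t1 t2 + RhN2 a1 a2 g1 g2 t1 t2)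

/-- N=2 model: Bob's relative revenue R_B. -/
noncomputable def RB2 (a1 a2 g1 g2 t1 t2 : ℝ) : ℝ :=
  R2N2 a1 a2 g1 g2 t1 t2 /
    (R1N2 a1 a2 g1 g2 t1 t2 + R2N2 a1 a2 g1 g2 t1 t2 + RhN2 a1 a2 g1 g2 t1 t2)

lemma RA2_eq_aux (α : ℝ) (h0 : 0 < α) (h3 : α < 1/3) :
    RA2 α α (1/2) (1/2) (1/3) (1/3) =
      (α/2 + 25/6*α^2 + 1/3*α^3 - 16/3*α^4) / (1 + 2*α) := by
  have hD : (1 + α + α + α*(1-α-α) + 2*α*α + α*(1-α-α) + 2*α*α*(1-α-α)) ≠ 0 := by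
    nlinarith [sq_nonneg α, sq_nonneg (α-1)]
  have h1 : (1:ℝ) + 2*α ≠ 0 := by linarith
  unfold RA2 R1N2 R2N2 RhN2
  simp only
  rw [← add_div, ← add_div]
  rw [div_div_div_cancel_right₀]
  · rw [div_eq_div_iff (by nlinarith : (2*α^2*(1+(1-α-α)) + (α+(1-α-α))*α*(1-α-α)*(1/2) + α*α*(1-α-α) + 4*α^2*α*(1+(1-α-α)) + 2*α*α*(1-α-α)^2*(1/3) + (2*α^2*(1+(1-α-α)) + (α+(1-α-α))*(1-α-α)*α*(1/2) + α*α*(1-α-α) + 4*α^2*α*(1+(1-α-α)) + 2*α*α*(1-α-α)^2*(1/3)) + (1-α-α + α*(1-α-α)^2*(2-1/2) + α*(1-α-α)^2*(2-1/2) + 2*α*α*(1-α-α)^2*(2-1/3-1/3) + α*α*(1-α-α)*(2-1/2-1/2))) ≠ 0) h1]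
    ring
  · exact hD

/-- In the N=2 model with γ1=γ2=1/2, θ1=θ2=1/3 and symmetric Hashrates α1=α2=α,
the profitable threshold is approximately 27%. -/
theorem n2_symmetric_threshold (α : ℝ) :
    ((0.28 ≤ α ∧ α < 1/3) → RA2 α α (1/2) (1/2) (1/3) (1/3) > α) ∧
    ((0 < α ∧ α ≤ 0.26) → RA2 α α (1/2) (1/2) (1/3) (1/3) < α) := by
  
  constructor
  · rintro ⟨ha, hb⟩
    have h0 : (0:ℝ) < α := by linarith [show (0:ℝ) < 0.28 by norm_num]
    rw [RA2_eq_aux α h0 hb, gt_iff_lt, lt_div_iff₀ (by linarith)]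
    nlinarith [mul_nonneg (sub_nonneg.2 ha) (sub_nonneg.2 ha),
      mul_nonneg (mul_nonneg (sub_nonneg.2 ha) (sub_nonneg.2 ha)) (sub_nonneg.2 ha),
      mul_nonneg (sub_nonneg.2 ha) (le_of_lt (sub_pos.2 hb)),
      mul_nonneg (mul_nonneg (sub_nonneg.2 ha) (sub_nonneg.2 ha)) (le_of_lt (sub_pos.2 hb))]
  · rintro ⟨ha, hb⟩
    have h3 : α < 1/3 := by
      have : (0.26:ℝ) < 1/3 := by norm_num
      linarith
    rw [RA2_eq_aux α ha h3, div_lt_iff₀ (by linarith)]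
    nlinarith [mul_pos ha ha, mul_nonneg (mul_nonneg ha.le ha.le) (sub_nonneg.2 hb),
      mul_nonneg (mul_nonneg (mul_nonneg ha.le ha.le) ha.le) (sub_nonneg.2 hb),
      mul_pos (mul_pos ha ha) ha]
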